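/- Let N_1, N_2 ∈ ℕ, let (X^{(1)}_{v_1}, v_1 ≤ N_1) and (X^{(2)}_{v_1,v_2}, v_1 ≤ N_1, v_2 ≤ N_2) be independent standard Gaussian families (all variables independent), and consider the hierarchical Gaussian field X_v = σ_1(v_1) X^{(1)}_{v_1} + σ_2 X^{(2)}_{v_1,v_2} for v = (v_1,v_2), where σ_2 > 0 and σ_1(v_1) > 0 may depend on v_1. Then for every β > 0, the expected log-partition function 𝔼[log Σ_v e^{βX_v}] is an increasing function of each variable σ_1(v_1). -/

import Mathlib

open MeasureTheory ProbabilityTheory Real Filter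

noncomputable section

/-- Vertices of the lattice `ℤ²`. -/
abbrev Vertex : Type := ℤ × ℤ

/-- The box `V_N = {1,…,N}²`. -/
def boxV (N : ℕ) : Finset Vertex := Finset.Icc 1 (N : ℤ) ×ˢ Finset.Icc 1 (N : ℤ)

/-- Two vertices of `ℤ²` are adjacent if they are nearest neighbours. -/
def adjacent (u v : Vertex) : Prop := |u.1 - v.1| + |u.2 - v.2| = 1

/-- The four nearest neighbours of a vertex. -/
def nbrs (v : Vertex) : Finset Vertex :=
  {(v.1 + 1, v.2), (v.1 - 1, v.2), (v.1, v.2 + 1), (v.1, v.2 - 1)}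

/-- `G` is the Green function of simple random walk on `ℤ²` killed upon exiting `A`:
it vanishes off `A` and satisfies the resolvent equation on `A`. -/
def IsGreenFn (A : Finset Vertex) (G : Vertex → Vertex → ℝ) : Prop :=
  (∀ v, v ∉ A → ∀ v', G v v' = 0) ∧
  (∀ v ∈ A, ∀ v', G v v' =
    (if v = v' then 1 else 0) + (1 / 4) * ∑ u ∈ nbrs v, G u v')

/-- `φ` is a centered Gaussian field on `A` (under `μ`) with covariance `G`: every
linear combination of the field over `A` is a centered real Gaussian variable with
the corresponding variance. -/
def IsGFF {Ω : Type} [MeasurableSpace Ω] (μ : Measure Ω) (A : Finset Vertex)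
    (φ : Vertex → Ω → ℝ) (G : Vertex → Vertex → ℝ) : Prop :=
  (∀ v, Measurable (φ v)) ∧
  ∀ c : Vertex → ℝ,
    Measure.map (fun ω => ∑ v ∈ A, c v * φ v ω) μ =
      gaussianReal 0 (∑ v ∈ A, ∑ v' ∈ A, c v * c v' * G v v').toNNReal

/-- The overlap `q(v,v') = E[φ_v φ_{v'}] / ((1/π) log N²)`. -/
def overlapQ (G : Vertex → Vertex → ℝ) (N : ℕ) (v v' : Vertex) : ℝ :=
  G v v' / ((1 / π) * Real.log ((N : ℝ) ^ 2))

/-- The partition function `Z(β) = Σ_{v ∈ A} e^{β φ_v}`. -/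
def Zsum {Ω : Type} (β : ℝ) (A : Finset Vertex) (φ : Vertex → Ω → ℝ) (ω : Ω) : ℝ :=
  ∑ v ∈ A, Real.exp (β * φ v ω)

/-- Averaged Gibbs expectation of a one-replica observable: `𝔼 𝒢_β[f(v)]`. -/
def gibbs1 {Ω : Type} [MeasurableSpace Ω] (μ : Measure Ω) (β : ℝ) (A : Finset Vertex)
    (φ : Vertex → Ω → ℝ) (f : Vertex → ℝ) : ℝ :=
  ∫ ω, (∑ v ∈ A, f v * Real.exp (β * φ v ω)) / Zsum β A φ ω ∂μ

/-- Averaged Gibbs expectation of a two-replica observable: `𝔼 𝒢_β^{×2}[f(v,v')]`. -/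
def gibbs2 {Ω : Type} [MeasurableSpace Ω] (μ : Measure Ω) (β : ℝ) (A : Finset Vertex)
    (φ : Vertex → Ω → ℝ) (f : Vertex → Vertex → ℝ) : ℝ :=
  ∫ ω, (∑ v ∈ A, ∑ v' ∈ A,
      f v v' * Real.exp (β * φ v ω) * Real.exp (β * φ v' ω)) / (Zsum β A φ ω) ^ 2 ∂μ

open Classical in
/-- The two-overlap distribution function `x_{β,N}(r) = 𝔼 𝒢^{×2}{q(v,v') ≤ r}`,
for the Gibbs measure on `A`. -/
def xTwoOverlap {Ω : Type} [MeasurableSpace Ω] (μ : Measure Ω) (β : ℝ) (A : Finset Vertex)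
    (φ : Vertex → Ω → ℝ) (G : Vertex → Vertex → ℝ) (N : ℕ) (r : ℝ) : ℝ :=
  gibbs2 μ β A φ (fun v v' => if overlapQ G N v v' ≤ r then 1 else 0)

/-- The boundary `∂V_N`: vertices outside `V_N` sharing an edge with `V_N`. -/
def bdryV (N : ℕ) : Set Vertex := {u | u ∉ boxV N ∧ ∃ v ∈ boxV N, adjacent u v}

/-- Euclidean distance between two vertices. -/
def eDist (u v : Vertex) : ℝ :=
  Real.sqrt (((u.1 - v.1 : ℤ) : ℝ) ^ 2 + ((u.2 - v.2 : ℤ) : ℝ) ^ 2)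

/-- `d_1(v,B)`, the Euclidean distance from `v` to a set `B` of vertices. -/
def dist1 (v : Vertex) (B : Set Vertex) : ℝ := sInf {r | ∃ u ∈ B, r = eDist v u}

open Classical in
/-- `A_{N,ρ} = {v ∈ V_N : d_1(v, ∂V_N) ≥ N^{1-ρ}}`. -/
def AN (N : ℕ) (ρ : ℝ) : Finset Vertex :=
  (boxV N).filter fun v => (N : ℝ) ^ (1 - ρ) ≤ dist1 v (bdryV N)

open Classical in
/-- `V_N^δ`, the set of points of `V_N` at distance greater than `δN` from `∂V_N`. -/
def VNdelta (N : ℕ) (δ : ℝ) : Finset Vertex :=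
  (boxV N).filter fun v => δ * (N : ℝ) < dist1 v (bdryV N)

/-- The box `[v]_t` of side length `N^{1-t}` centered at `v`, intersected with `V_N`. -/
def nbox (N : ℕ) (t : ℝ) (v : Vertex) : Set Vertex :=
  {u | u ∈ boxV N ∧ |((u.1 - v.1 : ℤ) : ℝ)| ≤ (N : ℝ) ^ (1 - t) / 2 ∧
    |((u.2 - v.2 : ℤ) : ℝ)| ≤ (N : ℝ) ^ (1 - t) / 2}

/-- The σ-algebra generated by the field variables `{φ_u : u ∈ S}`. -/
def fieldSigma {Ω : Type} [MeasurableSpace Ω] (φ : Vertex → Ω → ℝ) (S : Set Vertex) :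
    MeasurableSpace Ω :=
  ⨆ u ∈ S, MeasurableSpace.comap (φ u) inferInstance

/-- `E[φ_v | ℱ_{B^c}]`: the conditional expectation of `φ_v` given the field outside `B`
(within `V_N`). -/
def condOutside {Ω : Type} [MeasurableSpace Ω] (μ : Measure Ω) (N : ℕ)
    (φ : Vertex → Ω → ℝ) (B : Set Vertex) (v : Vertex) : Ω → ℝ :=
  μ[φ v | fieldSigma φ ((boxV N : Set Vertex) \ B)]

/-- `φ_{[v]_t} = E[φ_v | ℱ_{[v]_t^c}]`, with the convention `φ_{[v]_1} = φ_v`. -/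
def phiBox {Ω : Type} [MeasurableSpace Ω] (μ : Measure Ω) (N : ℕ) (t : ℝ)
    (φ : Vertex → Ω → ℝ) (v : Vertex) : Ω → ℝ :=
  if t < 1 then condOutside μ N φ (nbox N t v) v else φ v

/-- The `(α, σ⃗)`-GFF: `ψ_v = σ₁ φ_{[v]_α} + σ₂ (φ_v - φ_{[v]_α})`. -/
def psiField {Ω : Type} [MeasurableSpace Ω] (μ : Measure Ω) (N : ℕ) (α σ₁ σ₂ : ℝ)
    (φ : Vertex → Ω → ℝ) (v : Vertex) (ω : Ω) : ℝ :=
  σ₁ * phiBox μ N α φ v ω + σ₂ * (φ v ω - phiBox μ N α φ v ω)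

/-- The free energy of the `(α, σ⃗)`-GFF restricted to `A_{N,ρ}`. -/
def freeEnergyPsi {Ω : Type} [MeasurableSpace Ω] (μ : Measure Ω) (N : ℕ)
    (α σ₁ σ₂ ρ β : ℝ) (φ : Vertex → Ω → ℝ) (ω : Ω) : ℝ :=
  (1 / Real.log ((N : ℝ) ^ 2)) *
    Real.log (∑ v ∈ AN N ρ, Real.exp (β * psiField μ N α σ₁ σ₂ φ v ω))

/-- The REM free energy `f(β; σ²)` (with `σ = √σsq`). -/
def remFE (β σsq : ℝ) : ℝ :=
  if β ≤ Real.sqrt (2 * π) / Real.sqrt σsq then 1 + β ^ 2 * σsq / (2 * π)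
  else Real.sqrt (2 / π) * Real.sqrt σsq * β

/-- The limiting free energy `f^{(α,σ⃗)}(β)` of the `(α,σ⃗)`-GFF. -/
def fePsiLim (α σ₁ σ₂ β : ℝ) : ℝ :=
  if σ₁ ≤ σ₂ then remFE β (σ₁ ^ 2 * α + σ₂ ^ 2 * (1 - α))
  else α * remFE β (σ₁ ^ 2) + (1 - α) * remFE β (σ₂ ^ 2)

/-- The free energy of the 2D GFF. -/
def fGFF (β : ℝ) : ℝ :=
  if β ≤ Real.sqrt (2 * π) then 1 + β ^ 2 / (2 * π) else Real.sqrt (2 / π) * β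

/-- The overlap at scale `α`:
`q_α(v,v') = E[(φ_v - φ_{[v]_α})(φ_{v'} - φ_{[v']_α})] / ((1/π) log N²)`. -/
def overlapAtScale {Ω : Type} [MeasurableSpace Ω] (μ : Measure Ω) (N : ℕ) (α : ℝ)
    (φ : Vertex → Ω → ℝ) (v v' : Vertex) : ℝ :=
  (∫ ω, (φ v ω - phiBox μ N α φ v ω) * (φ v' ω - phiBox μ N α φ v' ω) ∂μ) /
    ((1 / π) * Real.log ((N : ℝ) ^ 2))

/-- The mean-one exponential distribution on `(0,∞)`. -/
def expMeasureOne : Measure ℝ :=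
  (volume.restrict (Set.Ioi (0 : ℝ))).withDensity fun x => ENNReal.ofReal (Real.exp (-x))

/-- `ξ` is a Poisson–Dirichlet variable with parameter `a` (under `μ`): it is equal in
law to the sequence of normalized, decreasingly ordered atoms `(Γ_i^{-1/a})_{i∈ℕ}` of a
Poisson random measure on `(0,∞)` with intensity `s^{-a-1}ds`, where
`Γ_i = E_0 + ⋯ + E_i` are the partial sums of i.i.d. mean-one exponential variables. -/
def IsPoissonDirichlet {Ω : Type} [MeasurableSpace Ω] (μ : Measure Ω) (a : ℝ)
    (ξ : ℕ → Ω → ℝ) : Prop :=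
  ∃ (Ω' : Type) (_ : MeasurableSpace Ω') (ν : Measure Ω') (E : ℕ → Ω' → ℝ),
    IsProbabilityMeasure ν ∧
    iIndepFun E ν ∧
    (∀ i, Measure.map (E i) ν = expMeasureOne) ∧
    Measure.map (fun ω' (i : ℕ) =>
        (∑ j ∈ Finset.range (i + 1), E j ω') ^ (-(1 : ℝ) / a) /
          ∑' j : ℕ, (∑ k ∈ Finset.range (j + 1), E k ω') ^ (-(1 : ℝ) / a)) ν =
      Measure.map (fun ω (i : ℕ) => ξ i ω) μ

/-- Index type for the `s(s-1)/2` overlaps of `s` replicas: pairs `l < l'`. -/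
abbrev OffDiag (s : ℕ) := {p : Fin s × Fin s // p.1 < p.2}

/-- A square box of side length `N^{1-α}/100` centered at `w` (a box of `ℬ_α`). -/
def sqBox (N : ℕ) (α : ℝ) (w : Vertex) : Set Vertex :=
  {u | |((u.1 - w.1 : ℤ) : ℝ)| ≤ (N : ℝ) ^ (1 - α) / 200 ∧
    |((u.2 - w.2 : ℤ) : ℝ)| ≤ (N : ℝ) ^ (1 - α) / 200}

/-- `B̃`: the intersection of all the neighbourhoods `[u]_α`, `u ∈ B`, for the box `B`
of `ℬ_α` centered at `w`. -/
def tildeBox (N : ℕ) (α : ℝ) (w : Vertex) : Set Vertex :=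
  ⋂ u ∈ sqBox N α w, nbox N α u

/-- The `(α,σ⃗)`-GFF truncated at scale `t`: `ψ_v(t) = σ₁ φ_{[v]_t}` for `t ≤ α` and
`ψ_v(t) = σ₁ φ_{[v]_α} + σ₂(φ_{[v]_t} - φ_{[v]_α})` for `t ≥ α`. -/
def psiTrunc {Ω : Type} [MeasurableSpace Ω] (μ : Measure Ω) (N : ℕ) (α σ₁ σ₂ t : ℝ)
    (φ : Vertex → Ω → ℝ) (v : Vertex) (ω : Ω) : ℝ :=
  if t ≤ α then σ₁ * phiBox μ N t φ v ω
  else σ₁ * phiBox μ N α φ v ω + σ₂ * (phiBox μ N t φ v ω - phiBox μ N α φ v ω)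

/-- The side length (a positive integer) of the boxes of the partition `ℬ_t`. -/
def gridSide (N : ℕ) (t : ℝ) : ℕ := max 1 ⌈(N : ℝ) ^ (1 - t) / 100⌉₊

open Classical in
/-- `Π_t`: the centers of the boxes of the partition `ℬ_t` that belong to `V_N^δ`. -/
def gridPts (N : ℕ) (δ t : ℝ) : Finset Vertex :=
  (VNdelta N δ).filter fun v => (gridSide N t : ℤ) ∣ v.1 ∧ (gridSide N t : ℤ) ∣ v.2

open Classical in
/-- The number of points `v ∈ Π_t` with `ψ_v(t) ≥ γ √(2/π) log N²`. -/
def gridHigh {Ω : Type} [MeasurableSpace Ω] (μ : Measure Ω) (N : ℕ) (α σ₁ σ₂ δ t γ : ℝ)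
    (φ : Vertex → Ω → ℝ) (ω : Ω) : ℕ :=
  ((gridPts N δ t).filter fun v =>
    γ * Real.sqrt (2 / π) * Real.log ((N : ℝ) ^ 2) ≤ psiTrunc μ N α σ₁ σ₂ t φ v ω).card

open Classical in
/-- The set `ℋ_N^{ψ,δ}(γ)` of `γ`-high points of the `(α,σ⃗)`-GFF within `V_N^δ`. -/
def highPoints {Ω : Type} [MeasurableSpace Ω] (μ : Measure Ω) (N : ℕ) (α σ₁ σ₂ δ γ : ℝ)
    (φ : Vertex → Ω → ℝ) (ω : Ω) : Finset Vertex :=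
  (VNdelta N δ).filter fun v =>
    Real.sqrt (2 / π) * γ * Real.log ((N : ℝ) ^ 2) ≤ psiField μ N α σ₁ σ₂ φ v ω

section StmtAux13


open MeasureTheory ProbabilityTheory Real

/-- Generalized Hölder / convexity of log-sum-exp under averaging. -/
lemma logsumexp_avg_le {κ V : Type*} (S : Finset κ) (T : Finset V) (hT : T.Nonempty)
    (w : κ → ℝ) (hw : ∀ s ∈ S, 0 ≤ w s) (hw1 : ∑ s ∈ S, w s = 1) (a : κ → V → ℝ) :
    Real.log (∑ v ∈ T, Real.exp (∑ s ∈ S, w s * a s v)) ≤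
      ∑ s ∈ S, w s * Real.log (∑ v ∈ T, Real.exp (a s v)) := by
  set Z : κ → ℝ := fun s => ∑ v ∈ T, Real.exp (a s v) with hZ
  have hZpos : ∀ s, 0 < Z s := fun s => Finset.sum_pos (fun v _ => Real.exp_pos _) hT
  have key : ∑ v ∈ T, Real.exp (∑ s ∈ S, w s * a s v) ≤ ∏ s ∈ S, Z s ^ (w s) := by
    have h1 : ∀ v ∈ T, Real.exp (∑ s ∈ S, w s * a s v)
        = (∏ s ∈ S, Z s ^ w s) * ∏ s ∈ S, (Real.exp (a s v) / Z s) ^ w s := by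
      intro v _
      rw [← Finset.prod_mul_distrib, Real.exp_sum]
      refine Finset.prod_congr rfl fun s hs => ?_
      rw [← Real.mul_rpow (hZpos s).le (by positivity),
        mul_div_cancel₀ _ (hZpos s).ne', mul_comm (w s), Real.exp_mul]
    rw [Finset.sum_congr rfl h1, ← Finset.mul_sum]
    have h2 : ∑ v ∈ T, ∏ s ∈ S, (Real.exp (a s v) / Z s) ^ w s ≤ 1 := by
      calc ∑ v ∈ T, ∏ s ∈ S, (Real.exp (a s v) / Z s) ^ w s
          ≤ ∑ v ∈ T, ∑ s ∈ S, w s * (Real.exp (a s v) / Z s) := by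
            refine Finset.sum_le_sum fun v _ => ?_
            exact Real.geom_mean_le_arith_mean_weighted S w _ hw hw1
              (fun s _ => by positivity)
        _ = ∑ s ∈ S, w s * ((∑ v ∈ T, Real.exp (a s v)) / Z s) := by
            rw [Finset.sum_comm]
            refine Finset.sum_congr rfl fun s _ => ?_
            rw [← Finset.mul_sum, ← Finset.sum_div]
        _ = 1 := by
            rw [← hw1]
            refine Finset.sum_congr rfl fun s _ => ?_
            rw [show (∑ v ∈ T, rexp (a s v)) = Z s from rfl, div_self (hZpos s).ne', mul_one]
    nlinarith [Finset.prod_nonneg (fun s (_ : s ∈ S) => Real.rpow_nonneg (hZpos s).le (w s))]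
  calc Real.log (∑ v ∈ T, Real.exp (∑ s ∈ S, w s * a s v))
      ≤ Real.log (∏ s ∈ S, Z s ^ w s) :=
        Real.log_le_log (Finset.sum_pos (fun v _ => Real.exp_pos _) hT) key
    _ = ∑ s ∈ S, w s * Real.log (Z s) := by
        rw [Real.log_prod (fun s _ => (Real.rpow_pos_of_pos (hZpos s) _).ne')]
        exact Finset.sum_congr rfl fun s _ => Real.log_rpow (hZpos s) _


open MeasureTheory ProbabilityTheory Real
open scoped NNReal ENNReal

lemma integrable_id_gaussianReal : Integrable (fun x : ℝ => x) (gaussianReal 0 1) := by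
  rw [gaussianReal_of_var_ne_zero _ one_ne_zero,
    integrable_withDensity_iff (measurable_gaussianPDF _ _)
      (ae_of_all _ fun x => ENNReal.ofReal_lt_top)]
  have h0 : ∀ x : ℝ, (gaussianPDF 0 1 x).toReal = gaussianPDFReal 0 1 x := fun x =>
    ENNReal.toReal_ofReal (gaussianPDFReal_nonneg _ _ _)
  simp only [h0]
  have h := (integrable_mul_exp_neg_mul_sq (b := (1:ℝ)/2) (by norm_num)).const_mul
    (√(2 * π * ((1:ℝ≥0):ℝ)))⁻¹
  refine h.congr (ae_of_all _ fun x => ?_)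
  unfold gaussianPDFReal
  simp only
  rw [show -(x - 0) ^ 2 / (2 * ((1:ℝ≥0):ℝ)) = -((1:ℝ)/2) * x ^ 2 by push_cast; ring]
  ring

lemma pi_map_eval {ι : Type*} [Fintype ι] (μ : Measure ℝ) [IsProbabilityMeasure μ] (j : ι) :
    (Measure.pi fun _ : ι => μ).map (fun x => x j) = μ := by
  classical
  ext s hs
  rw [Measure.map_apply (measurable_pi_apply j) hs,
    show (fun x : ι → ℝ => x j) ⁻¹' s
      = Set.pi Set.univ (Function.update (fun _ => Set.univ) j s) from Set.eval_preimage,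
    Measure.pi_pi]
  rw [Fintype.prod_eq_single j (fun i hi => by
    rw [Function.update_of_ne hi]; exact measure_univ)]
  rw [Function.update_self]

lemma integrable_eval_pi {ι : Type*} [Fintype ι] (j : ι) :
    Integrable (fun x : ι → ℝ => x j) (Measure.pi fun _ : ι => gaussianReal 0 1) := by
  have mp : MeasurePreserving (fun x : ι → ℝ => x j)
      (Measure.pi fun _ : ι => gaussianReal 0 1) (gaussianReal 0 1) :=
    ⟨measurable_pi_apply j, pi_map_eval _ j⟩
  exact (mp.integrable_comp aestronglyMeasurable_id).mpr integrable_id_gaussianReal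

lemma mp_const_mul_gaussian {c : ℝ} (hc : c ^ 2 = 1) :
    MeasurePreserving (fun x : ℝ => c * x) (gaussianReal 0 1) (gaussianReal 0 1) := by
  refine ⟨measurable_const_mul c, ?_⟩
  have h2 : (⟨c ^ 2, sq_nonneg _⟩ : ℝ≥0) * 1 = 1 := by ext; simpa using hc
  have := gaussianReal_map_const_mul (μ := 0) (v := 1) c
  rw [mul_zero] at this
  rw [this]
  congr 1


open MeasureTheory ProbabilityTheory Real

lemma abs_logsumexp_le {V : Type*} [Fintype V] [Nonempty V] (a : V → ℝ) :
    |Real.log (∑ v, Real.exp (a v))| ≤ Real.log (Fintype.card V) + ∑ v, |a v| := by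
  have hpos : 0 < ∑ v, Real.exp (a v) :=
    Finset.sum_pos (fun v _ => Real.exp_pos _) Finset.univ_nonempty
  have hone : (1 : ℝ) ≤ (Fintype.card V : ℝ) := by
    exact_mod_cast Nat.one_le_iff_ne_zero.2 Fintype.card_ne_zero
  have hlogc : 0 ≤ Real.log (Fintype.card V) := Real.log_nonneg hone
  have habs : ∀ v : V, |a v| ≤ ∑ u, |a u| := fun v =>
    Finset.single_le_sum (fun u _ => abs_nonneg (a u)) (Finset.mem_univ v)
  rw [abs_le]
  constructor
  · have v₀ : V := Classical.arbitrary V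
    have h1 : Real.exp (-(∑ u, |a u|)) ≤ ∑ v, Real.exp (a v) := by
      refine le_trans (Real.exp_le_exp.2 ?_)
        (Finset.single_le_sum (fun v _ => (Real.exp_pos (a v)).le) (Finset.mem_univ v₀))
      have := habs v₀
      have := neg_abs_le (a v₀)
      linarith
    have h2 := (Real.le_log_iff_exp_le hpos).2 h1
    linarith
  · have h2 : ∑ v, Real.exp (a v) ≤ (Fintype.card V : ℝ) * Real.exp (∑ u, |a u|) := by
      calc ∑ v, Real.exp (a v) ≤ ∑ _v : V, Real.exp (∑ u, |a u|) :=
            Finset.sum_le_sum fun v _ =>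
              Real.exp_le_exp.2 (le_trans (le_abs_self _) (habs v))
        _ = (Fintype.card V : ℝ) * Real.exp (∑ u, |a u|) := by
            rw [Finset.sum_const, Finset.card_univ, nsmul_eq_mul]
    calc Real.log (∑ v, Real.exp (a v))
        ≤ Real.log ((Fintype.card V : ℝ) * Real.exp (∑ u, |a u|)) := Real.log_le_log hpos h2
      _ = Real.log (Fintype.card V) + ∑ v, |a v| := by
          rw [Real.log_mul (by positivity) (Real.exp_pos _).ne', Real.log_exp]

section signs

variable {n : ℕ} (lam : Fin n → ℝ)

/-- weights of sign vectors -/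
noncomputable def wgt (s : Fin n → Bool) : ℝ :=
  ∏ i, (if s i then (1 + lam i) / 2 else (1 - lam i) / 2)

/-- sign of a Boolean -/
def sgn (s : Fin n → Bool) (i : Fin n) : ℝ := if s i then 1 else -1

lemma wgt_nonneg (h0 : ∀ i, 0 ≤ lam i) (h1 : ∀ i, lam i ≤ 1) (s : Fin n → Bool) :
    0 ≤ wgt lam s := by
  refine Finset.prod_nonneg fun i _ => ?_
  have := h0 i; have := h1 i
  split <;> linarith

lemma sum_wgt : ∑ s : Fin n → Bool, wgt lam s = 1 := by
  classical
  unfold wgt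
  rw [← Fintype.piFinset_univ, Finset.sum_prod_piFinset Finset.univ
    (fun i (b : Bool) => if b then (1 + lam i) / 2 else (1 - lam i) / 2)]
  rw [Finset.prod_eq_one]
  intro i _
  rw [Fintype.sum_bool]
  norm_num
  ring

lemma sum_wgt_sgn (i : Fin n) : ∑ s : Fin n → Bool, wgt lam s * sgn s i = lam i := by
  classical
  have hrw : ∀ s : Fin n → Bool, wgt lam s * sgn s i
      = ∏ j, ((if s j then (1 + lam j) / 2 else (1 - lam j) / 2) *
          (if j = i then (if s j then (1:ℝ) else -1) else 1)) := by
    intro s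
    rw [Finset.prod_mul_distrib]
    unfold wgt sgn
    congr 1
    rw [Finset.prod_ite_eq' Finset.univ i (fun j => if s j then (1:ℝ) else -1)]
    simp
  simp only [hrw]
  rw [← Fintype.piFinset_univ, Finset.sum_prod_piFinset Finset.univ
    (fun j (b : Bool) => (if b then (1 + lam j) / 2 else (1 - lam j) / 2) *
      (if j = i then (if b then (1:ℝ) else -1) else 1))]
  have hfac : ∀ j, (∑ b : Bool, ((if b then (1 + lam j) / 2 else (1 - lam j) / 2) *
      (if j = i then (if b then (1:ℝ) else -1) else 1))) = if j = i then lam j else 1 := by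
    intro j
    by_cases hj : j = i <;>
      · rw [Fintype.sum_bool]
        simp only [hj, if_true, if_false, ite_true, ite_false]
        norm_num
        try ring
  calc (∏ j, ∑ b : Bool, ((if b then (1 + lam j) / 2 else (1 - lam j) / 2) *
        (if j = i then (if b then (1:ℝ) else -1) else 1)))
      = ∏ j, (if j = i then lam j else 1) := Finset.prod_congr rfl fun j _ => hfac j
    _ = lam i := by rw [Finset.prod_ite_eq' Finset.univ i lam]; simp

end signs


variable {N₁ N₂ : ℕ}

/-- The log-partition function on the canonical product space. -/
noncomputable def Gfun (N₁ N₂ : ℕ) (β σ₂ : ℝ) (c : Fin N₁ → ℝ)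
    (x : (Fin N₁ ⊕ (Fin N₁ × Fin N₂)) → ℝ) : ℝ :=
  Real.log (∑ v : Fin N₁ × Fin N₂,
    Real.exp (β * (c v.1 * x (Sum.inl v.1) + σ₂ * x (Sum.inr v))))

lemma Gfun_cont [Nonempty (Fin N₁ × Fin N₂)] (β σ₂ : ℝ) (c : Fin N₁ → ℝ) :
    Continuous (Gfun N₁ N₂ β σ₂ c) := by
  refine Continuous.log ?_ fun x =>
    (Finset.sum_pos (fun v _ => Real.exp_pos _) Finset.univ_nonempty).ne'
  exact continuous_finset_sum _ fun v _ => Real.continuous_exp.comp (by fun_prop)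

lemma Gfun_integrable [Nonempty (Fin N₁ × Fin N₂)] (β σ₂ : ℝ) (c : Fin N₁ → ℝ) :
    Integrable (Gfun N₁ N₂ β σ₂ c)
      (Measure.pi fun _ : Fin N₁ ⊕ (Fin N₁ × Fin N₂) => gaussianReal 0 1) := by
  have hb : Integrable (fun x : (Fin N₁ ⊕ (Fin N₁ × Fin N₂)) → ℝ =>
      Real.log (Fintype.card (Fin N₁ × Fin N₂)) +
        ∑ v : Fin N₁ × Fin N₂, |β * (c v.1 * x (Sum.inl v.1) + σ₂ * x (Sum.inr v))|)
      (Measure.pi fun _ => gaussianReal 0 1) := by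
    refine (integrable_const _).add (integrable_finset_sum _ fun v _ => ?_)
    exact ((((integrable_eval_pi (Sum.inl v.1)).const_mul (c v.1)).add
      ((integrable_eval_pi (Sum.inr v)).const_mul σ₂)).const_mul β).abs
  refine hb.mono (Gfun_cont β σ₂ c).aestronglyMeasurable (ae_of_all _ fun x => ?_)
  rw [Real.norm_eq_abs]
  have h1 := abs_logsumexp_le
    (fun v : Fin N₁ × Fin N₂ => β * (c v.1 * x (Sum.inl v.1) + σ₂ * x (Sum.inr v)))
  exact le_trans h1 (le_abs_self _)

/-- The key monotonicity inequality on the canonical product space. -/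
lemma Gfun_mono [Nonempty (Fin N₁ × Fin N₂)] (β : ℝ) (σ₂ : ℝ)
    (σ σ' : Fin N₁ → ℝ) (hσ : ∀ i, 0 < σ i) (hσ' : ∀ i, 0 < σ' i) (hle : σ ≤ σ') :
    ∫ x, Gfun N₁ N₂ β σ₂ σ x ∂(Measure.pi fun _ => gaussianReal 0 1) ≤
      ∫ x, Gfun N₁ N₂ β σ₂ σ' x ∂(Measure.pi fun _ => gaussianReal 0 1) := by
  classical
  set P : Measure ((Fin N₁ ⊕ (Fin N₁ × Fin N₂)) → ℝ) :=
    Measure.pi fun _ => gaussianReal 0 1 with hP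
  set lam : Fin N₁ → ℝ := fun i => σ i / σ' i with hlam
  have hlam0 : ∀ i, 0 ≤ lam i := fun i => div_nonneg (hσ i).le (hσ' i).le
  have hlam1 : ∀ i, lam i ≤ 1 := fun i => (div_le_one (hσ' i)).2 (hle i)
  set T : (Fin N₁ → Bool) → ((Fin N₁ ⊕ (Fin N₁ × Fin N₂)) → ℝ) →
      ((Fin N₁ ⊕ (Fin N₁ × Fin N₂)) → ℝ) :=
    fun s x j => Sum.elim (sgn s) (fun _ => (1:ℝ)) j * x j with hT
  have hTmp : ∀ s, MeasurePreserving (T s) P P := by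
    intro s
    refine measurePreserving_pi _ _ (fun j => mp_const_mul_gaussian ?_)
    rcases j with i | p
    · simp only [Sum.elim_inl]; unfold sgn; split <;> norm_num
    · simp
  -- pointwise inequality
  have hpt : ∀ x, Gfun N₁ N₂ β σ₂ σ x ≤
      ∑ s : Fin N₁ → Bool, wgt lam s * Gfun N₁ N₂ β σ₂ σ' (T s x) := by
    intro x
    have hinner : ∀ v : Fin N₁ × Fin N₂,
        β * (σ v.1 * x (Sum.inl v.1) + σ₂ * x (Sum.inr v))
          = ∑ s : Fin N₁ → Bool, wgt lam s *
            (β * (σ' v.1 * (sgn s v.1 * x (Sum.inl v.1)) + σ₂ * x (Sum.inr v))) := by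
      intro v
      have hterm : ∀ s : Fin N₁ → Bool, wgt lam s *
          (β * (σ' v.1 * (sgn s v.1 * x (Sum.inl v.1)) + σ₂ * x (Sum.inr v)))
          = (β * σ' v.1 * x (Sum.inl v.1)) * (wgt lam s * sgn s v.1)
            + (β * σ₂ * x (Sum.inr v)) * wgt lam s := fun s => by ring
      rw [Finset.sum_congr rfl (fun s _ => hterm s), Finset.sum_add_distrib,
        ← Finset.mul_sum, ← Finset.mul_sum, sum_wgt_sgn, sum_wgt]
      have h2 : lam v.1 = σ v.1 / σ' v.1 := rfl
      have hne : σ' v.1 ≠ 0 := (hσ' v.1).ne'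
      rw [h2]
      field_simp
    calc Gfun N₁ N₂ β σ₂ σ x
        = Real.log (∑ v : Fin N₁ × Fin N₂, Real.exp (∑ s : Fin N₁ → Bool,
            wgt lam s * (β * (σ' v.1 * (sgn s v.1 * x (Sum.inl v.1))
              + σ₂ * x (Sum.inr v))))) := by
          unfold Gfun
          exact congrArg Real.log (Finset.sum_congr rfl fun v _ => by rw [hinner v])
      _ ≤ ∑ s : Fin N₁ → Bool, wgt lam s * Real.log (∑ v : Fin N₁ × Fin N₂,
            Real.exp (β * (σ' v.1 * (sgn s v.1 * x (Sum.inl v.1))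
              + σ₂ * x (Sum.inr v)))) :=
          logsumexp_avg_le Finset.univ Finset.univ Finset.univ_nonempty _
            (fun s _ => wgt_nonneg lam hlam0 hlam1 s) (sum_wgt lam) _
      _ = ∑ s : Fin N₁ → Bool, wgt lam s * Gfun N₁ N₂ β σ₂ σ' (T s x) := by
          refine Finset.sum_congr rfl fun s _ => ?_
          congr 1
          unfold Gfun
          exact congrArg Real.log (Finset.sum_congr rfl fun v _ => by
            simp only [hT, Sum.elim_inl, Sum.elim_inr, one_mul])
  have hcompInt : ∀ s : Fin N₁ → Bool,
      Integrable (fun x => Gfun N₁ N₂ β σ₂ σ' (T s x)) P :=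
    fun s => ((hTmp s).integrable_comp
      (Gfun_cont β σ₂ σ').aestronglyMeasurable).mpr (Gfun_integrable β σ₂ σ')
  have hIcomp : ∀ s : Fin N₁ → Bool,
      ∫ x, Gfun N₁ N₂ β σ₂ σ' (T s x) ∂P = ∫ x, Gfun N₁ N₂ β σ₂ σ' x ∂P := by
    intro s
    conv_rhs => rw [← (hTmp s).map_eq]
    rw [integral_map (hTmp s).measurable.aemeasurable
      (Gfun_cont β σ₂ σ').aestronglyMeasurable]
  calc ∫ x, Gfun N₁ N₂ β σ₂ σ x ∂P
      ≤ ∫ x, ∑ s : Fin N₁ → Bool, wgt lam s * Gfun N₁ N₂ β σ₂ σ' (T s x) ∂P :=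
        integral_mono (Gfun_integrable β σ₂ σ)
          (integrable_finset_sum _ fun s _ => (hcompInt s).const_mul _) hpt
    _ = ∑ s : Fin N₁ → Bool, ∫ x, wgt lam s * Gfun N₁ N₂ β σ₂ σ' (T s x) ∂P :=
        integral_finset_sum _ fun s _ => (hcompInt s).const_mul _
    _ = ∑ s : Fin N₁ → Bool, wgt lam s * ∫ x, Gfun N₁ N₂ β σ₂ σ' x ∂P := by
        refine Finset.sum_congr rfl fun s _ => ?_
        rw [integral_const_mul, hIcomp s]
    _ = ∫ x, Gfun N₁ N₂ β σ₂ σ' x ∂P := by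
        rw [← Finset.sum_mul, sum_wgt, one_mul]

end StmtAux13

/-- the expected log-partition function of a 2-level hierarchical
Gaussian field is increasing in the variance parameters of the first level. -/
theorem stmt_13
    (N₁ N₂ : ℕ) (Ω : Type) [MeasurableSpace Ω] (μ : Measure Ω) [IsProbabilityMeasure μ]
    (X₁ : Fin N₁ → Ω → ℝ) (X₂ : Fin N₁ × Fin N₂ → Ω → ℝ)
    (hind : iIndepFun
      (Sum.elim X₁ X₂ : Sum (Fin N₁) (Fin N₁ × Fin N₂) → Ω → ℝ) μ)
    (h1 : ∀ i, Measure.map (X₁ i) μ = gaussianReal 0 1)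
    (h2 : ∀ p, Measure.map (X₂ p) μ = gaussianReal 0 1)
    (β : ℝ) (hβ : 0 < β) (σ₂ : ℝ) (hσ₂ : 0 < σ₂)
    (σ σ' : Fin N₁ → ℝ) (hσ : ∀ i, 0 < σ i) (hσ' : ∀ i, 0 < σ' i) (hle : σ ≤ σ') :
    (∫ ω, Real.log (∑ v : Fin N₁ × Fin N₂,
        Real.exp (β * (σ v.1 * X₁ v.1 ω + σ₂ * X₂ v ω))) ∂μ) ≤
      ∫ ω, Real.log (∑ v : Fin N₁ × Fin N₂,
        Real.exp (β * (σ' v.1 * X₁ v.1 ω + σ₂ * X₂ v ω))) ∂μ := by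
  classical
  rcases isEmpty_or_nonempty (Fin N₁ × Fin N₂) with hE | hNE
  · simp [Finset.univ_eq_empty]
  have hmap : ∀ j : Fin N₁ ⊕ (Fin N₁ × Fin N₂),
      Measure.map (Sum.elim X₁ X₂ j) μ = gaussianReal 0 1 := by
    rintro (i | p)
    · exact h1 i
    · exact h2 p
  have hFae : ∀ j : Fin N₁ ⊕ (Fin N₁ × Fin N₂), AEMeasurable (Sum.elim X₁ X₂ j) μ :=
    fun j => aemeasurable_of_map_neZero (by rw [hmap j]; infer_instance)
  have hGae : AEMeasurable (fun ω (j : Fin N₁ ⊕ (Fin N₁ × Fin N₂)) =>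
      Sum.elim X₁ X₂ j ω) μ := by
    refine ⟨fun ω j => (hFae j).mk (Sum.elim X₁ X₂ j) ω,
      measurable_pi_lambda _ (fun j => (hFae j).measurable_mk), ?_⟩
    filter_upwards [Filter.eventually_all.2
      (fun j : Fin N₁ ⊕ (Fin N₁ × Fin N₂) => (hFae j).ae_eq_mk)] with ω h
    exact funext h
  have hjoint : Measure.map (fun ω (j : Fin N₁ ⊕ (Fin N₁ × Fin N₂)) =>
      Sum.elim X₁ X₂ j ω) μ = Measure.pi fun _ => gaussianReal 0 1 := by
    refine (Measure.pi_eq (μ := fun _ : Fin N₁ ⊕ (Fin N₁ × Fin N₂) => gaussianReal 0 1)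
      fun s hs => ?_).symm
    rw [Measure.map_apply_of_aemeasurable hGae (MeasurableSet.univ_pi hs)]
    have hpre : (fun ω (j : Fin N₁ ⊕ (Fin N₁ × Fin N₂)) => Sum.elim X₁ X₂ j ω) ⁻¹'
        Set.pi Set.univ s
        = ⋂ j ∈ (Finset.univ : Finset (Fin N₁ ⊕ (Fin N₁ × Fin N₂))),
            Sum.elim X₁ X₂ j ⁻¹' s j := by
      ext ω
      simp [Set.mem_pi]
    rw [hpre, hind.measure_inter_preimage_eq_mul Finset.univ (fun j _ => hs j)]
    exact Finset.prod_congr rfl fun j _ => by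
      rw [← Measure.map_apply_of_aemeasurable (hFae j) (hs j), hmap j]
  have htrans : ∀ c : Fin N₁ → ℝ,
      (∫ ω, Real.log (∑ v : Fin N₁ × Fin N₂,
          Real.exp (β * (c v.1 * X₁ v.1 ω + σ₂ * X₂ v ω))) ∂μ)
        = ∫ x, Gfun N₁ N₂ β σ₂ c x
            ∂(Measure.pi fun _ : Fin N₁ ⊕ (Fin N₁ × Fin N₂) => gaussianReal 0 1) := by
    intro c
    rw [← hjoint, integral_map hGae (Gfun_cont β σ₂ c).aestronglyMeasurable]
    rfl
  rw [htrans σ, htrans σ']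
  exact Gfun_mono β σ₂ σ σ' hσ hσ' hle
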